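/- Let E be a semilattice with zero and let e ∈ E be nonzero. Then there exists a tight character φ on E such that φ(e) = 1. -/

import Mathlib

/-- A finite subset `C` is a cover for `f`: every `c ∈ C` satisfies `c ≤ f` and every
nonzero `g ≤ f` meets some `c ∈ C`. -/
def IsCover {E : Type*} [SemilatticeInf E] [OrderBot E] (C : Finset E) (f : E) : Prop :=
  (∀ c ∈ C, c ≤ f) ∧ ∀ g : E, g ≠ ⊥ → g ≤ f → ∃ c ∈ C, g ⊓ c ≠ ⊥

/-- The (finite) family `{v i : i ∈ C}` is a cover for `f`. -/
def IsCoverFam {ι : Type*} {E : Type*} [SemilatticeInf E] [OrderBot E]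
    (C : Finset ι) (v : ι → E) (f : E) : Prop :=
  (∀ i ∈ C, v i ≤ f) ∧ ∀ g : E, g ≠ ⊥ → g ≤ f → ∃ i ∈ C, g ⊓ v i ≠ ⊥

/-- A character on a semilattice with zero: a multiplicative `{0,1}`-valued map sending
`0` to `0` and not identically zero. -/
def IsChar {E : Type*} [SemilatticeInf E] [OrderBot E] (φ : E → Bool) : Prop :=
  φ ⊥ = false ∧ (∀ e f : E, φ (e ⊓ f) = (φ e && φ f)) ∧ ∃ e : E, φ e = true

/-- A tight character: a character such that, for every `f` and every cover `C` for `f`,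
`φ f = max_{c ∈ C} φ c`. -/
def IsTightChar {E : Type*} [SemilatticeInf E] [OrderBot E] (φ : E → Bool) : Prop :=
  IsChar φ ∧ ∀ f : E, ∀ C : Finset E, IsCover C f → (φ f = true ↔ ∃ c ∈ C, φ c = true)

/-- A filter on a semilattice with zero. -/
def IsFilterOn {E : Type*} [SemilatticeInf E] [OrderBot E] (ξ : Set E) : Prop :=
  ξ.Nonempty ∧ ⊥ ∉ ξ ∧ (∀ e ∈ ξ, ∀ f ∈ ξ, e ⊓ f ∈ ξ) ∧ ∀ e ∈ ξ, ∀ f : E, e ≤ f → f ∈ ξ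

/-- A tight filter: whenever `C` is a cover for some `f ∈ ξ`, some element of `C` lies in `ξ`. -/
def IsTightFilter {E : Type*} [SemilatticeInf E] [OrderBot E] (ξ : Set E) : Prop :=
  IsFilterOn ξ ∧ ∀ f ∈ ξ, ∀ C : Finset E, IsCover C f → ∃ c ∈ C, c ∈ ξ

/-- The tight order: `e` is tightly below `f` iff there is no nonzero `g ≤ e` with `g ⊓ f = ⊥`. -/
def TightBelow {E : Type*} [SemilatticeInf E] [OrderBot E] (e f : E) : Prop :=
  ¬ ∃ g : E, g ≠ ⊥ ∧ g ≤ e ∧ g ⊓ f = ⊥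

/-- Tight equivalence. -/
def TightEquiv {E : Type*} [SemilatticeInf E] [OrderBot E] (e f : E) : Prop :=
  TightBelow e f ∧ TightBelow f e

/-- A homomorphism is tightly injective if it reflects tight equivalence. -/
def TightlyInjective {E F : Type*} [SemilatticeInf E] [OrderBot E] [SemilatticeInf F] [OrderBot F]
    (h : E → F) : Prop :=
  ∀ e₁ e₂ : E, TightEquiv (h e₁) (h e₂) → TightEquiv e₁ e₂

/-- A homomorphism is tightly surjective if its range is a large subset of the codomain:
for every `f` there is a finite `C ⊆ E` with `h e ≼ f` for all `e ∈ C` and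
`{f ⊓ h e : e ∈ C}` a cover for `f`. -/
def TightlySurjective {E F : Type*} [SemilatticeInf E] [OrderBot E] [SemilatticeInf F] [OrderBot F]
    (h : E → F) : Prop :=
  ∀ f : F, ∃ C : Finset E, (∀ e ∈ C, TightBelow (h e) f) ∧ IsCoverFam C (fun e => f ⊓ h e) f

/-- A homomorphism of semilattices with zero is tight if it satisfies conditions
(4.1.ii) and (4.3.ii) of the paper. -/
def IsTightHom {E F : Type*} [SemilatticeInf E] [OrderBot E] [SemilatticeInf F] [OrderBot F]
    (h : E → F) : Prop :=
  (∀ f : F, ∃ C : Finset E, IsCoverFam C (fun e => f ⊓ h e) f) ∧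
  (∀ e : E, ∀ C : Finset E, IsCover C e → IsCoverFam C h (h e))

/-- In a semilattice with zero, for every nonzero `e` there exists a tight
character `φ` with `φ e = 1`. -/
theorem exists_tight_char_of_ne_bot {E : Type*} [SemilatticeInf E] [OrderBot E]
    (e : E) (he : e ≠ ⊥) :
    ∃ φ : E → Bool, IsTightChar φ ∧ φ e = true := by
  classical
  set S : Set (Set E) := {ξ | IsFilterOn ξ ∧ e ∈ ξ} with hS
  have hbase : {f : E | e ≤ f} ∈ S := by
    refine ⟨⟨⟨e, le_refl e⟩, ?_, ?_, ?_⟩, le_refl e⟩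
    · intro h; exact he (le_bot_iff.mp h)
    · intro a ha b hb; exact le_inf ha hb
    · intro a ha f hf; exact le_trans ha hf
  have hchainub : ∀ c ⊆ S, IsChain (· ⊆ ·) c → c.Nonempty →
      ∃ ub ∈ S, ∀ s ∈ c, s ⊆ ub := by
    rintro c hcS hchain ⟨ξ0, hξ0⟩
    have he0 : e ∈ ξ0 := (hcS hξ0).2
    refine ⟨⋃₀ c, ⟨⟨⟨e, ⟨ξ0, hξ0, he0⟩⟩, ?_, ?_, ?_⟩, ⟨ξ0, hξ0, he0⟩⟩,
      fun s hs => Set.subset_sUnion_of_mem hs⟩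
    · rintro ⟨t, htc, hbt⟩
      exact (hcS htc).1.2.1 hbt
    · rintro a ⟨t, htc, hat⟩ b ⟨u, huc, hbu⟩
      rcases hchain.total htc huc with h | h
      · exact ⟨u, huc, (hcS huc).1.2.2.1 a (h hat) b hbu⟩
      · exact ⟨t, htc, (hcS htc).1.2.2.1 a hat b (h hbu)⟩
    · rintro a ⟨t, htc, hat⟩ f hf
      exact ⟨t, htc, (hcS htc).1.2.2.2 a hat f hf⟩
  obtain ⟨ξ, -, hξS, hξmax⟩ := zorn_subset_nonempty S hchainub _ hbase
  obtain ⟨⟨hne, hbot, hmeet, hup⟩, heξ⟩ := hξS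
  have hultra : ∀ c : E, c ∉ ξ → ∃ f ∈ ξ, c ⊓ f = ⊥ := by
    intro c hc
    by_contra hcon
    push_neg at hcon
    set ξ' : Set E := {g | ∃ f ∈ ξ, c ⊓ f ≤ g} with hξ'
    have hsub : ξ ⊆ ξ' := fun f hf => ⟨f, hf, inf_le_right⟩
    have hξ'S : ξ' ∈ S := by
      refine ⟨⟨⟨e, hsub heξ⟩, ?_, ?_, ?_⟩, hsub heξ⟩
      · rintro ⟨f, hf, hle⟩
        exact hcon f hf (le_bot_iff.mp hle)
      · rintro a ⟨f1, hf1, h1⟩ b ⟨f2, hf2, h2⟩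
        exact ⟨f1 ⊓ f2, hmeet _ hf1 _ hf2,
          le_inf (le_trans (inf_le_inf_left c inf_le_left) h1)
                 (le_trans (inf_le_inf_left c inf_le_right) h2)⟩
      · rintro a ⟨f, hf, h⟩ g hg
        exact ⟨f, hf, le_trans h hg⟩
    exact hc (hξmax hξ'S hsub ⟨e, heξ, inf_le_left⟩)
  have hfin : ∀ (C : Finset E) (x : E → E), (∀ i ∈ C, x i ∈ ξ) → ∀ f ∈ ξ,
      ∃ g ∈ ξ, g ≤ f ∧ ∀ i ∈ C, g ≤ x i := by
    intro C
    induction C using Finset.induction_on with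
    | empty => intro x _ f hf; exact ⟨f, hf, le_refl f, by simp⟩
    | insert _ _ ha ih =>
      rename_i a C
      intro x hx f hf
      obtain ⟨g, hg, hgf, hgx⟩ := ih x (fun i hi => hx i (Finset.mem_insert_of_mem hi)) f hf
      refine ⟨g ⊓ x a, hmeet _ hg _ (hx a (Finset.mem_insert_self a C)),
        le_trans inf_le_left hgf, ?_⟩
      intro i hi
      rcases Finset.mem_insert.mp hi with rfl | hi
      · exact inf_le_right
      · exact le_trans inf_le_left (hgx i hi)
  refine ⟨fun f => decide (f ∈ ξ), ⟨⟨?_, ?_, ⟨e, by simp [heξ]⟩⟩, ?_⟩, by simp [heξ]⟩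
  · simp [hbot]
  · intro a b
    by_cases hab : a ⊓ b ∈ ξ
    · have ha : a ∈ ξ := hup _ hab a inf_le_left
      have hb : b ∈ ξ := hup _ hab b inf_le_right
      simp [hab, ha, hb]
    · have : ¬ (a ∈ ξ ∧ b ∈ ξ) := fun ⟨ha, hb⟩ => hab (hmeet _ ha _ hb)
      rcases not_and_or.mp this with h | h <;> simp [hab, h]
  · intro f C hC
    simp only [decide_eq_true_eq]
    constructor
    · intro hf
      by_contra hcon
      push_neg at hcon
      choose x hx1 hx2 using fun c (hc : c ∈ C) => hultra c (hcon c hc)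
      obtain ⟨g, hg, hgf, hgx⟩ := hfin C (fun c => if hc : c ∈ C then x c hc else e)
        (by intro i hi; simp [hi, hx1 i hi]) f hf
      obtain ⟨c, hc, hgc⟩ := hC.2 g (fun h => hbot (h ▸ hg)) hgf
      apply hgc
      have h2 : g ⊓ c ≤ x c hc ⊓ c := inf_le_inf_right c (by simpa [hc] using hgx c hc)
      exact le_bot_iff.mp (le_trans h2 (le_of_eq (by rw [inf_comm]; exact hx2 c hc)))
    · rintro ⟨c, hc, hcξ⟩
      exact hup _ hcξ f (hC.1 c hc)
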